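/- If B ⊆ 𝔽ⁿ is finite and P-independent and a ∈ 𝔽ⁿ ∖ B̄, then B ∪ {a} is P-independent. Consequently, a finite subset B of a finitely generated P-closed set Ω ⊆ 𝔽ⁿ is a P-basis of Ω if and only if B is a maximal P-independent subset of Ω (i.e., B is P-independent and whenever B ⊆ G ⊆ Ω with G P-independent, then G = B). -/

import Mathlib

/- Common setup: free multivariate skew polynomial rings over a division ring. -/

open Matrix Finsupp

/-- The underlying left `𝔽`-module of the free multivariate skew polynomial ring:
the free left `𝔽`-module with basis the free monoid on `n` symbols. -/
abbrev SkewPoly (𝔽 : Type*) [DivisionRing 𝔽] (n : ℕ) : Type _ := FreeMonoid (Fin n) →₀ 𝔽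

namespace SkewPoly

variable {𝔽 : Type*} [DivisionRing 𝔽] {n : ℕ}

/-- The variable `xᵢ` as a skew polynomial. -/
noncomputable def X (𝔽 : Type*) [DivisionRing 𝔽] {n : ℕ} (i : Fin n) : SkewPoly 𝔽 n :=
  Finsupp.single (FreeMonoid.of i) 1

/-- The constant `a` as a skew polynomial (coefficient on the empty word). -/
noncomputable def C {𝔽 : Type*} [DivisionRing 𝔽] (n : ℕ) (a : 𝔽) :
    SkewPoly 𝔽 n := Finsupp.single 1 a

/-- The degree of a skew polynomial: the maximal length of a word in its support
(`⊥` for the zero polynomial). -/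
noncomputable def deg (F : SkewPoly 𝔽 n) : WithBot ℕ :=
  F.support.sup fun m => ((FreeMonoid.length m : ℕ) : WithBot ℕ)

/-- A matrix morphism `σ : 𝔽 → Mₙ(𝔽)`: a unital ring homomorphism. -/
def IsMatrixMorphism (σ : 𝔽 → Matrix (Fin n) (Fin n) 𝔽) : Prop :=
  σ 1 = 1 ∧ (∀ a b : 𝔽, σ (a + b) = σ a + σ b) ∧ (∀ a b : 𝔽, σ (a * b) = σ a * σ b)

/-- A `σ`-vector derivation `δ : 𝔽 → 𝔽ⁿ`: additive with `δ(ab) = σ(a)δ(b) + δ(a)b`. -/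
def IsVectorDerivation (σ : 𝔽 → Matrix (Fin n) (Fin n) 𝔽) (δ : 𝔽 → Fin n → 𝔽) : Prop :=
  (∀ a b : 𝔽, δ (a + b) = δ a + δ b) ∧
    (∀ a b : 𝔽, δ (a * b) = σ a *ᵥ δ b + fun i => δ a i * b)

/-- A multiplication on the free module `SkewPoly 𝔽 n` making it a ring (with the
existing addition) whose identity is the empty word, which restricts to concatenation
on monomials, is additive on degrees of nonzero elements, and for which left
multiplication by constants is scalar multiplication. -/
structure RawMul (𝔽 : Type*) [DivisionRing 𝔽] (n : ℕ) where
  /-- the multiplication -/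
  mul : SkewPoly 𝔽 n → SkewPoly 𝔽 n → SkewPoly 𝔽 n
  mul_add : ∀ F G H : SkewPoly 𝔽 n, mul F (G + H) = mul F G + mul F H
  add_mul : ∀ F G H : SkewPoly 𝔽 n, mul (F + G) H = mul F H + mul G H
  mul_assoc : ∀ F G H : SkewPoly 𝔽 n, mul (mul F G) H = mul F (mul G H)
  one_mul : ∀ F : SkewPoly 𝔽 n, mul (C n 1) F = F
  mul_one : ∀ F : SkewPoly 𝔽 n, mul F (C n 1) = F
  mono_mul_mono : ∀ m m' : FreeMonoid (Fin n),
    mul (Finsupp.single m 1) (Finsupp.single m' 1) = Finsupp.single (m * m') 1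
  const_mul : ∀ (a : 𝔽) (F : SkewPoly 𝔽 n), mul (C n a) F = a • F
  deg_mul : ∀ F G : SkewPoly 𝔽 n, F ≠ 0 → G ≠ 0 → deg (mul F G) = deg F + deg G

/-- The multiplication `S` satisfies the commutation rule
`xᵢ a = Σⱼ σ_{i,j}(a) xⱼ + δᵢ(a)`. -/
def HasCommRule (S : RawMul 𝔽 n) (σ : 𝔽 → Matrix (Fin n) (Fin n) 𝔽)
    (δ : 𝔽 → Fin n → 𝔽) : Prop :=
  ∀ (i : Fin n) (a : 𝔽),
    S.mul (X 𝔽 i) (C n a) =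
      (∑ j : Fin n, Finsupp.single (FreeMonoid.of j) (σ a i j)) + C n (δ a i)

/-- `F = Σᵢ Gᵢ (xᵢ - aᵢ) + b`, i.e. `b` is a remainder of `F` upon right division
by `x₁ - a₁, …, xₙ - aₙ`; equivalently `F - b` lies in the left ideal generated by
the `xᵢ - aᵢ`. -/
def Decomposes (S : RawMul 𝔽 n) (a : Fin n → 𝔽) (F : SkewPoly 𝔽 n) (b : 𝔽) : Prop :=
  ∃ G : Fin n → SkewPoly 𝔽 n,
    F = (∑ i : Fin n, S.mul (G i) (X 𝔽 i - C n (a i))) + C n b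

/-- The evaluation of `F` at the point `a`: the unique `b ∈ 𝔽` such that `F - b`
lies in the left ideal generated by `x₁ - a₁, …, xₙ - aₙ`. -/
noncomputable def eval (S : RawMul 𝔽 n) (a : Fin n → 𝔽) (F : SkewPoly 𝔽 n) : 𝔽 :=
  letI := Classical.propDecidable (∃ b : 𝔽, Decomposes S a F b)
  if h : ∃ b : 𝔽, Decomposes S a F b then h.choose else 0

/-- The `(σ,δ)`-conjugate `a^c = σ(c) a c⁻¹ + δ(c) c⁻¹` of `a` with respect to `c`. -/
noncomputable def conj (σ : 𝔽 → Matrix (Fin n) (Fin n) 𝔽) (δ : 𝔽 → Fin n → 𝔽)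
    (a : Fin n → 𝔽) (c : 𝔽) : Fin n → 𝔽 :=
  fun i => (σ c *ᵥ a) i * c⁻¹ + δ c i * c⁻¹

/-- `I(Ω)`: the set of skew polynomials vanishing at every point of `Ω`. -/
def zeroIdeal (S : RawMul 𝔽 n) (Ω : Set (Fin n → 𝔽)) : Set (SkewPoly 𝔽 n) :=
  {F | ∀ a ∈ Ω, eval S a F = 0}

/-- The left ideal of `SkewPoly 𝔽 n` generated by `x₁ - a₁, …, xₙ - aₙ`
(the set of sums of left multiples of the generators). -/
def pointIdeal (S : RawMul 𝔽 n) (a : Fin n → 𝔽) : Set (SkewPoly 𝔽 n) :=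
  {F | ∃ G : Fin n → SkewPoly 𝔽 n, F = ∑ i : Fin n, S.mul (G i) (X 𝔽 i - C n (a i))}

/-- The P-closure `Ω̄ = Z(I(Ω))` of a set of points `Ω`. -/
def pClosure (S : RawMul 𝔽 n) (Ω : Set (Fin n → 𝔽)) : Set (Fin n → 𝔽) :=
  {a | ∀ F ∈ zeroIdeal S Ω, eval S a F = 0}

/-- `Ω` is P-closed if it equals its P-closure. -/
def IsPClosed (S : RawMul 𝔽 n) (Ω : Set (Fin n → 𝔽)) : Prop := pClosure S Ω = Ω

/-- `B` is P-independent: no point of `B` lies in the P-closure of the rest. -/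
def PIndep (S : RawMul 𝔽 n) (B : Set (Fin n → 𝔽)) : Prop :=
  ∀ a ∈ B, a ∉ pClosure S (B \ {a})

/-- `B` is a P-basis of `Ω`: a P-independent subset of `Ω` whose P-closure is `Ω`. -/
def IsPBasis (S : RawMul 𝔽 n) (B Ω : Set (Fin n → 𝔽)) : Prop :=
  B ⊆ Ω ∧ PIndep S B ∧ pClosure S B = Ω

/-- `Ω` is finitely generated: it is the P-closure of a finite subset of itself. -/
def FinGen (S : RawMul 𝔽 n) (Ω : Set (Fin n → 𝔽)) : Prop :=
  ∃ G : Set (Fin n → 𝔽), G.Finite ∧ G ⊆ Ω ∧ pClosure S G = Ω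

/-- The rank of a P-closed set: the (common) cardinality of its P-bases. -/
noncomputable def pRank (S : RawMul 𝔽 n) (Ω : Set (Fin n → 𝔽)) : ℕ :=
  sInf {k : ℕ | ∃ B : Finset (Fin n → 𝔽), IsPBasis S ↑B Ω ∧ B.card = k}

/-- The image of the evaluation map `E_Ω : R → 𝔽^Ω`, as a left `𝔽`-subspace of `𝔽^Ω`
(the span of the image; the image is itself a subspace since evaluation is left linear). -/
noncomputable def evalSpan (S : RawMul 𝔽 n) (Ω : Set (Fin n → 𝔽)) :
    Submodule 𝔽 (↥Ω → 𝔽) :=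
  Submodule.span 𝔽 (Set.range fun F : SkewPoly 𝔽 n => fun a : ↥Ω => eval S ↑a F)

/-- `I` is a two-sided ideal with respect to the multiplication `S`. -/
def IsTwoSidedIdealSet (S : RawMul 𝔽 n) (I : Set (SkewPoly 𝔽 n)) : Prop :=
  (0 : SkewPoly 𝔽 n) ∈ I ∧ (∀ F ∈ I, ∀ G ∈ I, F + G ∈ I) ∧ (∀ F ∈ I, -F ∈ I) ∧
    (∀ F ∈ I, ∀ G : SkewPoly 𝔽 n, S.mul G F ∈ I) ∧
    (∀ F ∈ I, ∀ G : SkewPoly 𝔽 n, S.mul F G ∈ I)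


/-- The left row-rank of the skew Vandermonde matrix `V_d(G)`: the dimension of the
left `𝔽`-span of its rows `(N_m(c))_{c ∈ G}`, indexed by the words `m` of length `< d`,
where `N_m(c)` is the evaluation of the monomial `m` at the point `c`. -/
noncomputable def vandermondeRank (S : RawMul 𝔽 n) (G : Finset (Fin n → 𝔽)) (d : ℕ) :
    Cardinal :=
  Module.rank 𝔽 ↥(Submodule.span 𝔽 (Set.range
    fun m : {m : FreeMonoid (Fin n) // FreeMonoid.length m < d} =>
      fun c : ↥G => eval S ↑c (Finsupp.single (m : FreeMonoid (Fin n)) (1 : 𝔽))))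

end SkewPoly

open SkewPoly

section Aux

namespace SkewPoly

variable {𝔽 : Type*} [DivisionRing 𝔽] {n : ℕ}
variable (σ : 𝔽 → Matrix (Fin n) (Fin n) 𝔽) (δ : 𝔽 → Fin n → 𝔽)

/-- The norm `N_m(a)` of a word, defined by the left recursion. -/
def Nrm (a : Fin n → 𝔽) : List (Fin n) → 𝔽
  | [] => 1
  | j :: m => (σ (Nrm a m) *ᵥ a) j + δ (Nrm a m) j

/-- Explicit evaluation map, as a left-linear map. -/
noncomputable def Ev (a : Fin n → 𝔽) : SkewPoly 𝔽 n →ₗ[𝔽] 𝔽 :=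
  Finsupp.linearCombination 𝔽 (fun m : FreeMonoid (Fin n) => Nrm σ δ a (FreeMonoid.toList m))

lemma Ev_single (a : Fin n → 𝔽) (m : FreeMonoid (Fin n)) (c : 𝔽) :
    Ev σ δ a (Finsupp.single m c) = c * Nrm σ δ a (FreeMonoid.toList m) := by
  simp [Ev, Finsupp.linearCombination_single, smul_eq_mul]

lemma toList_one' : FreeMonoid.toList (1 : FreeMonoid (Fin n)) = [] := rfl

lemma Ev_C (a : Fin n → 𝔽) (b : 𝔽) : Ev σ δ a (C n b) = b := by
  rw [C, Ev_single, toList_one']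
  simp [Nrm]

variable {σ δ}

lemma sigma_zero (hσ : IsMatrixMorphism σ) : σ 0 = 0 := by
  have h2 := hσ.2.1 0 0
  simp only [add_zero] at h2
  exact add_eq_left.mp h2.symm

lemma delta_zero (hδ : IsVectorDerivation σ δ) : δ 0 = 0 := by
  have h2 := hδ.1 0 0
  simp only [add_zero] at h2
  exact (add_eq_left.mp h2.symm)

lemma delta_one (hσ : IsMatrixMorphism σ) (hδ : IsVectorDerivation σ δ) : δ 1 = 0 := by
  have h := hδ.2 1 1
  rw [one_mul, hσ.1, Matrix.one_mulVec] at h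
  have : δ (1:𝔽) = δ 1 + δ 1 := by
    conv_lhs => rw [h]
    funext i; simp
  exact (add_eq_left.mp this.symm)

variable (S : RawMul 𝔽 n)

lemma zero_mul' (G : SkewPoly 𝔽 n) : S.mul 0 G = 0 := by
  have h := S.add_mul 0 0 G
  simp only [add_zero] at h
  exact (add_eq_left.mp h.symm)

lemma mul_zero' (F : SkewPoly 𝔽 n) : S.mul F 0 = 0 := by
  have h := S.mul_add F 0 0
  simp only [add_zero] at h
  exact (add_eq_left.mp h.symm)

lemma smul_mul (c : 𝔽) (F G : SkewPoly 𝔽 n) : S.mul (c • F) G = c • S.mul F G := by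
  rw [← S.const_mul, ← S.const_mul, S.mul_assoc]

lemma mul_sub' (F G H : SkewPoly 𝔽 n) : S.mul F (G - H) = S.mul F G - S.mul F H := by
  have h := S.mul_add F (G - H) H
  rw [sub_add_cancel] at h
  exact eq_sub_of_add_eq h.symm

lemma sum_mul' {ι : Type*} (s : Finset ι) (f : ι → SkewPoly 𝔽 n) (H : SkewPoly 𝔽 n) :
    S.mul (∑ i ∈ s, f i) H = ∑ i ∈ s, S.mul (f i) H :=
  map_sum (AddMonoidHom.mk' (fun F => S.mul F H) (fun a b => S.add_mul a b H)) f s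

lemma mul_sum' {ι : Type*} (s : Finset ι) (F : SkewPoly 𝔽 n) (f : ι → SkewPoly 𝔽 n) :
    S.mul F (∑ i ∈ s, f i) = ∑ i ∈ s, S.mul F (f i) :=
  map_sum (AddMonoidHom.mk' (fun H => S.mul F H) (fun a b => S.mul_add F a b)) f s

lemma single_eq_smul (m : FreeMonoid (Fin n)) (c : 𝔽) :
    (Finsupp.single m c : SkewPoly 𝔽 n) = c • Finsupp.single m 1 := by
  rw [Finsupp.smul_single', mul_one]

lemma keyrec_single (hσ : IsMatrixMorphism σ) (hδ : IsVectorDerivation σ δ)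
    (hS : HasCommRule S σ δ) (a : Fin n → 𝔽) (j : Fin n) (m : FreeMonoid (Fin n)) (c : 𝔽) :
    Ev σ δ a (S.mul (X 𝔽 j) (Finsupp.single m c)) =
      (σ (Ev σ δ a (Finsupp.single m c)) *ᵥ a) j + δ (Ev σ δ a (Finsupp.single m c)) j := by
  have h1 : (Finsupp.single m c : SkewPoly 𝔽 n) = S.mul (C n c) (Finsupp.single m 1) := by
    rw [S.const_mul, single_eq_smul]
  rw [h1, ← S.mul_assoc, hS j c, S.add_mul, sum_mul' S]
  have h2 : ∀ k : Fin n, S.mul (Finsupp.single (FreeMonoid.of k) (σ c j k)) (Finsupp.single m 1)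
      = Finsupp.single (FreeMonoid.of k * m) (σ c j k) := by
    intro k
    rw [single_eq_smul, smul_mul S, S.mono_mul_mono]
    simp [smul_smul, Finsupp.smul_single']
  have h3 : S.mul (C n (δ c j)) (Finsupp.single m 1) = Finsupp.single m (δ c j) := by
    rw [S.const_mul, single_eq_smul]
    simp [smul_smul, Finsupp.smul_single']
  simp only [h2, h3, map_add, map_sum, Ev_single, ← h1]
  set N := Nrm σ δ a (FreeMonoid.toList m) with hN
  have htl : ∀ k : Fin n, FreeMonoid.toList (FreeMonoid.of k * m) = k :: FreeMonoid.toList m :=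
    fun k => FreeMonoid.toList_of_mul k m
  simp only [htl]
  have hNk : ∀ k : Fin n, Nrm σ δ a (k :: FreeMonoid.toList m)
      = (σ N *ᵥ a) k + δ N k := fun k => rfl
  simp only [hNk]
  rw [hσ.2.2, hδ.2, ← Matrix.mulVec_mulVec]
  simp only [Matrix.mulVec, dotProduct, Pi.add_apply, mul_add,
    Finset.sum_add_distrib, add_assoc]

lemma keyrec (hσ : IsMatrixMorphism σ) (hδ : IsVectorDerivation σ δ)
    (hS : HasCommRule S σ δ) (a : Fin n → 𝔽) (j : Fin n) (H : SkewPoly 𝔽 n) :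
    Ev σ δ a (S.mul (X 𝔽 j) H) = (σ (Ev σ δ a H) *ᵥ a) j + δ (Ev σ δ a H) j := by
  induction H using Finsupp.induction with
  | zero =>
      simp [mul_zero' S, sigma_zero hσ, delta_zero hδ, Matrix.zero_mulVec]
  | single_add m c H hm hc ih =>
      rw [S.mul_add, map_add, map_add, keyrec_single S hσ hδ hS a j m c, ih,
        hσ.2.1, hδ.1, Matrix.add_mulVec]
      simp only [Pi.add_apply]
      abel

lemma Ev_single_mul (hσ : IsMatrixMorphism σ) (hδ : IsVectorDerivation σ δ)
    (hS : HasCommRule S σ δ) (a : Fin n → 𝔽) (i : Fin n) (m : FreeMonoid (Fin n)) :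
    Ev σ δ a (S.mul (Finsupp.single m 1) (X 𝔽 i - C n (a i))) = 0 := by
  induction m using FreeMonoid.recOn with
  | one =>
      have : (Finsupp.single (1 : FreeMonoid (Fin n)) (1:𝔽)) = C n 1 := rfl
      rw [this, S.one_mul, map_sub, Ev_C]
      have : Ev σ δ a (X 𝔽 i) = a i := by
        rw [X, Ev_single, one_mul]
        show Nrm σ δ a [i] = a i
        show (σ (Nrm σ δ a []) *ᵥ a) i + δ (Nrm σ δ a []) i = a i
        show (σ 1 *ᵥ a) i + δ 1 i = a i
        rw [hσ.1, Matrix.one_mulVec, delta_one hσ hδ]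
        simp
      rw [this, sub_self]
  | of_mul x xs ih =>
      have h1 : (Finsupp.single (FreeMonoid.of x * xs) (1:𝔽)) =
          S.mul (X 𝔽 x) (Finsupp.single xs 1) := (S.mono_mul_mono _ _).symm
      rw [h1, S.mul_assoc, keyrec S hσ hδ hS, ih, sigma_zero hσ, delta_zero hδ]
      simp [Matrix.zero_mulVec]

lemma Ev_mul_gen (hσ : IsMatrixMorphism σ) (hδ : IsVectorDerivation σ δ)
    (hS : HasCommRule S σ δ) (a : Fin n → 𝔽) (i : Fin n) (G : SkewPoly 𝔽 n) :
    Ev σ δ a (S.mul G (X 𝔽 i - C n (a i))) = 0 := by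
  induction G using Finsupp.induction with
  | zero => rw [zero_mul' S, map_zero]
  | single_add m c H hm hc ih =>
      rw [S.add_mul, map_add, ih, add_zero, single_eq_smul, smul_mul S, _root_.map_smul,
        Ev_single_mul S hσ hδ hS, smul_zero]

lemma Ev_pointIdeal (hσ : IsMatrixMorphism σ) (hδ : IsVectorDerivation σ δ)
    (hS : HasCommRule S σ δ) (a : Fin n → 𝔽) (Gs : Fin n → SkewPoly 𝔽 n) :
    Ev σ δ a (∑ i : Fin n, S.mul (Gs i) (X 𝔽 i - C n (a i))) = 0 := by
  rw [map_sum]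
  exact Finset.sum_eq_zero fun i _ => Ev_mul_gen S hσ hδ hS a i (Gs i)

lemma single_of_decomp (a : Fin n → 𝔽) (k : Fin n) (c : 𝔽) :
    (Finsupp.single (FreeMonoid.of k) c : SkewPoly 𝔽 n) =
      S.mul (C n c) (X 𝔽 k - C n (a k)) + C n (c * a k) := by
  rw [S.const_mul, smul_sub, X, C, C, Finsupp.smul_single', Finsupp.smul_single', mul_one]
  abel

lemma decomposes_single_one (hσ : IsMatrixMorphism σ) (hδ : IsVectorDerivation σ δ)
    (hS : HasCommRule S σ δ) (a : Fin n → 𝔽) (m : FreeMonoid (Fin n)) :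
    Decomposes S a (Finsupp.single m 1) (Nrm σ δ a (FreeMonoid.toList m)) := by
  induction m using FreeMonoid.recOn with
  | one =>
      exact ⟨0, by simp [zero_mul' S]; rfl⟩
  | of_mul x xs ih =>
      obtain ⟨G, hG⟩ := ih
      set b := Nrm σ δ a (FreeMonoid.toList xs) with hb
      refine ⟨fun i => S.mul (X 𝔽 x) (G i) + C n (σ b x i), ?_⟩
      have h1 : (Finsupp.single (FreeMonoid.of x * xs) (1:𝔽)) =
          S.mul (X 𝔽 x) (Finsupp.single xs 1) := (S.mono_mul_mono _ _).symm
      rw [h1, hG, S.mul_add, mul_sum' S, hS x b]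
      have h2 : ∀ i : Fin n, S.mul (X 𝔽 x) (S.mul (G i) (X 𝔽 i - C n (a i)))
          = S.mul (S.mul (X 𝔽 x) (G i)) (X 𝔽 i - C n (a i)) := fun i => (S.mul_assoc _ _ _).symm
      simp only [h2, S.add_mul]
      have h3 : ∀ k : Fin n, (Finsupp.single (FreeMonoid.of k) (σ b x k) : SkewPoly 𝔽 n)
          = S.mul (C n (σ b x k)) (X 𝔽 k - C n (a k)) + C n (σ b x k * a k) :=
        fun k => single_of_decomp S a k _
      simp only [h3]
      have h4 : Nrm σ δ a (FreeMonoid.toList (FreeMonoid.of x * xs))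
          = ∑ k : Fin n, σ b x k * a k + δ b x := by
        rw [FreeMonoid.toList_of_mul]
        show (σ b *ᵥ a) x + δ b x = _
        simp [Matrix.mulVec, dotProduct]
      rw [h4]
      have h5 : (C n (∑ k : Fin n, σ b x k * a k + δ b x) : SkewPoly 𝔽 n)
          = ∑ k : Fin n, C n (σ b x k * a k) + C n (δ b x) := by
        rw [C, Finsupp.single_add, Finsupp.single_finset_sum]
        rfl
      rw [h5, Finset.sum_add_distrib, Finset.sum_add_distrib]
      abel

lemma decomposes_add (a : Fin n → 𝔽) {F F' : SkewPoly 𝔽 n} {b b' : 𝔽}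
    (h : Decomposes S a F b) (h' : Decomposes S a F' b') :
    Decomposes S a (F + F') (b + b') := by
  obtain ⟨G, hG⟩ := h; obtain ⟨G', hG'⟩ := h'
  refine ⟨G + G', ?_⟩
  simp only [Pi.add_apply, S.add_mul, Finset.sum_add_distrib, hG, hG', C, Finsupp.single_add]
  abel

lemma decomposes_smul (a : Fin n → 𝔽) {F : SkewPoly 𝔽 n} {b : 𝔽} (c : 𝔽)
    (h : Decomposes S a F b) : Decomposes S a (c • F) (c * b) := by
  obtain ⟨G, hG⟩ := h
  refine ⟨c • G, ?_⟩
  rw [hG, smul_add, Finset.smul_sum]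
  simp only [Pi.smul_apply, smul_mul S, C, Finsupp.smul_single']

lemma decomposes_ev (hσ : IsMatrixMorphism σ) (hδ : IsVectorDerivation σ δ)
    (hS : HasCommRule S σ δ) (a : Fin n → 𝔽) (F : SkewPoly 𝔽 n) :
    Decomposes S a F (Ev σ δ a F) := by
  induction F using Finsupp.induction with
  | zero =>
      refine ⟨0, ?_⟩
      simp [zero_mul' S, map_zero, C]
  | single_add m c H hm hc ih =>
      have h1 := decomposes_smul S a c (decomposes_single_one S hσ hδ hS a m)
      rw [← single_eq_smul] at h1
      have := decomposes_add S a h1 ih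
      rwa [map_add, Ev_single] at *
      
lemma eval_eq_Ev (hσ : IsMatrixMorphism σ) (hδ : IsVectorDerivation σ δ)
    (hS : HasCommRule S σ δ) (a : Fin n → 𝔽) (F : SkewPoly 𝔽 n) :
    eval S a F = Ev σ δ a F := by
  have hex : ∃ b, Decomposes S a F b := ⟨_, decomposes_ev S hσ hδ hS a F⟩
  rw [eval]
  simp only [dif_pos hex]
  obtain ⟨G, hG⟩ := hex.choose_spec
  have := congrArg (Ev σ δ a) hG
  rw [map_add, Ev_pointIdeal S hσ hδ hS, zero_add, Ev_C] at this
  exact this.symm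

lemma subset_pClosure (Ω : Set (Fin n → 𝔽)) : Ω ⊆ pClosure S Ω :=
  fun a ha F hF => hF a ha

lemma pClosure_mono {Ω Ω' : Set (Fin n → 𝔽)} (h : Ω ⊆ Ω') :
    pClosure S Ω ⊆ pClosure S Ω' :=
  fun a ha F hF => ha F (fun c hc => hF c (h hc))

lemma factor_through {M N : Type*} [AddCommGroup M] [AddCommGroup N]
    [Module 𝔽 M] [Module 𝔽 N] (f : M →ₗ[𝔽] N) (g : M →ₗ[𝔽] 𝔽)
    (h : LinearMap.ker f ≤ LinearMap.ker g) :
    ∃ lam : N →ₗ[𝔽] 𝔽, ∀ x, lam (f x) = g x := by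
  let gbar : (M ⧸ LinearMap.ker f) →ₗ[𝔽] 𝔽 := (LinearMap.ker f).liftQ g h
  let e := f.quotKerEquivRange
  obtain ⟨lam, hlam⟩ := LinearMap.exists_extend (gbar.comp e.symm.toLinearMap)
  refine ⟨lam, fun x => ?_⟩
  have h1 : (⟨f x, LinearMap.mem_range_self f x⟩ : LinearMap.range f)
      = e (Submodule.Quotient.mk x) := by
    ext
    exact (LinearMap.quotKerEquivRange_apply_mk f x).symm
  have h2 : lam (f x) = lam ((LinearMap.range f).subtype
      ⟨f x, LinearMap.mem_range_self f x⟩) := rfl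
  rw [h2, ← LinearMap.comp_apply, hlam, h1]
  simp [gbar, Submodule.liftQ_apply]

lemma rep_of_mem_pClosure (hσ : IsMatrixMorphism σ) (hδ : IsVectorDerivation σ δ)
    (hS : HasCommRule S σ δ) (G : Finset (Fin n → 𝔽)) (b : Fin n → 𝔽)
    (hb : b ∈ pClosure S ↑G) :
    ∃ μ : (Fin n → 𝔽) → 𝔽, ∀ F : SkewPoly 𝔽 n,
      Ev σ δ b F = ∑ c ∈ G, Ev σ δ c F * μ c := by
  classical
  let f : SkewPoly 𝔽 n →ₗ[𝔽] ({c // c ∈ G} → 𝔽) :=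
    LinearMap.pi (fun c : {c // c ∈ G} => Ev σ δ (↑c))
  have hker : LinearMap.ker f ≤ LinearMap.ker (Ev σ δ b) := by
    intro F hF
    have hF' : ∀ c ∈ G, Ev σ δ c F = 0 := by
      intro c hc
      exact congrFun (LinearMap.mem_ker.mp hF) ⟨c, hc⟩
    have hFz : F ∈ zeroIdeal S ↑G := by
      intro c hc
      rw [eval_eq_Ev S hσ hδ hS]
      exact hF' c hc
    have := hb F hFz
    rwa [eval_eq_Ev S hσ hδ hS] at this
  obtain ⟨lam, hlam⟩ := factor_through f (Ev σ δ b) hker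
  refine ⟨fun c => if h : c ∈ G then lam (fun j => if (⟨c, h⟩ : {c // c ∈ G}) = j
    then 1 else 0) else 0, fun F => ?_⟩
  have h1 : Ev σ δ b F = lam (f F) := (hlam F).symm
  have h2 : lam (f F) = ∑ c : {c // c ∈ G}, f F c *
      lam (fun j => if c = j then 1 else 0) := by
    conv_lhs => rw [pi_eq_sum_univ (f F)]
    rw [map_sum]
    exact Finset.sum_congr rfl fun c _ => by rw [_root_.map_smul, smul_eq_mul]
  rw [h1, h2, ← Finset.sum_attach G
    (fun c => Ev σ δ c F * (if h : c ∈ G then lam (fun j => if (⟨c, h⟩ : {c // c ∈ G}) = j then 1 else 0) else 0))]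
  refine Finset.sum_congr rfl fun c _ => ?_
  simp only [dif_pos c.2]
  rfl

lemma exchange (hσ : IsMatrixMorphism σ) (hδ : IsVectorDerivation σ δ)
    (hS : HasCommRule S σ δ) {Cs : Set (Fin n → 𝔽)} (hCfin : Cs.Finite)
    {a b : Fin n → 𝔽} (hba : b ∈ pClosure S (insert a Cs))
    (hbC : b ∉ pClosure S Cs) : a ∈ pClosure S (insert b Cs) := by
  classical
  by_cases haC : a ∈ Cs
  · rw [Set.insert_eq_self.mpr haC] at hba; exact absurd hba hbC
  have hfin : (insert a Cs).Finite := hCfin.insert a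
  set G : Finset (Fin n → 𝔽) := hfin.toFinset with hG
  have hGcoe : (↑G : Set (Fin n → 𝔽)) = insert a Cs := hfin.coe_toFinset
  have hb' : b ∈ pClosure S ↑G := by rw [hGcoe]; exact hba
  obtain ⟨μ, hμ⟩ := rep_of_mem_pClosure S hσ hδ hS G b hb'
  have haG : a ∈ G := (Set.Finite.mem_toFinset hfin).mpr (Set.mem_insert a Cs)
  have hsplit : ∀ F : SkewPoly 𝔽 n, Ev σ δ b F =
      Ev σ δ a F * μ a + ∑ c ∈ G.erase a, Ev σ δ c F * μ c := by
    intro F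
    rw [hμ F, ← Finset.add_sum_erase _ _ haG]
  have herase : ∀ c ∈ G.erase a, c ∈ Cs := by
    intro c hc
    have h1 := Finset.mem_erase.mp hc
    have h2 : c ∈ insert a Cs := by rw [← hGcoe]; exact h1.2
    rcases h2 with h | h
    · exact absurd h h1.1
    · exact h
  by_cases hμa : μ a = 0
  · exfalso
    apply hbC
    intro F hF
    rw [eval_eq_Ev S hσ hδ hS, hsplit F, hμa, mul_zero, zero_add]
    refine Finset.sum_eq_zero fun c hc => ?_
    have := hF c (herase c hc)
    rw [eval_eq_Ev S hσ hδ hS] at this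
    rw [this, zero_mul]
  · intro F hF
    have hbF : Ev σ δ b F = 0 := by
      have := hF b (Set.mem_insert b Cs)
      rwa [eval_eq_Ev S hσ hδ hS] at this
    have hsum : ∑ c ∈ G.erase a, Ev σ δ c F * μ c = 0 := by
      refine Finset.sum_eq_zero fun c hc => ?_
      have := hF c (Set.mem_insert_of_mem b (herase c hc))
      rw [eval_eq_Ev S hσ hδ hS] at this
      rw [this, zero_mul]
    have h0 : Ev σ δ a F * μ a = 0 := by
      have := hsplit F
      rw [hbF, hsum, add_zero] at this
      exact this.symm
    rw [eval_eq_Ev S hσ hδ hS]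
    rcases mul_eq_zero.mp h0 with h | h
    · exact h
    · exact absurd h hμa

end SkewPoly
end Aux
/-- Adjoining to a finite P-independent set a point outside its
P-closure keeps it P-independent; consequently a finite subset of a finitely generated
P-closed set `Ω` is a P-basis of `Ω` iff it is a maximal P-independent subset of `Ω`. -/
theorem stmt16 {𝔽 : Type*} [DivisionRing 𝔽] {n : ℕ} (hn : 0 < n)
    (σ : 𝔽 → Matrix (Fin n) (Fin n) 𝔽) (δ : 𝔽 → Fin n → 𝔽)
    (hσ : IsMatrixMorphism σ) (hδ : IsVectorDerivation σ δ)
    (S : RawMul 𝔽 n) (hS : HasCommRule S σ δ) :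
    (∀ B : Set (Fin n → 𝔽), B.Finite → PIndep S B →
      ∀ a : Fin n → 𝔽, a ∉ pClosure S B → PIndep S (insert a B)) ∧
    (∀ Ω B : Set (Fin n → 𝔽), IsPClosed S Ω → FinGen S Ω → B ⊆ Ω → B.Finite →
      (IsPBasis S B Ω ↔
        (PIndep S B ∧
          ∀ G : Set (Fin n → 𝔽), B ⊆ G → G ⊆ Ω → PIndep S G → G = B))) := by
  have part1 : ∀ B : Set (Fin n → 𝔽), B.Finite → PIndep S B →
      ∀ a : Fin n → 𝔽, a ∉ pClosure S B → PIndep S (insert a B) := by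
    intro B hBfin hBind a haB
    have haB' : a ∉ B := fun h => haB (subset_pClosure S B h)
    intro b hb
    rcases hb with rfl | hbB
    · rw [Set.insert_diff_self_of_notMem haB']
      exact haB
    · intro hbcl
      have hne : b ≠ a := fun h => haB' (h ▸ hbB)
      have hset : insert a B \ {b} = insert a (B \ {b}) := by
        ext x
        simp only [Set.mem_diff, Set.mem_insert_iff, Set.mem_singleton_iff]
        constructor
        · rintro ⟨h1 | h1, h2⟩
          · exact Or.inl h1
          · exact Or.inr ⟨h1, h2⟩
        · rintro (h1 | ⟨h1, h2⟩)
          · refine ⟨Or.inl h1, ?_⟩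
            rw [h1]; exact hne.symm
          · exact ⟨Or.inr h1, h2⟩
      rw [hset] at hbcl
      have hex := exchange S hσ hδ hS (Set.Finite.diff hBfin : (B \ {b}).Finite) hbcl (hBind b hbB)
      rw [Set.insert_diff_singleton, Set.insert_eq_self.mpr hbB] at hex
      exact haB hex
  refine ⟨part1, ?_⟩
  intro Ω B hΩcl hfg hBΩ hBfin
  constructor
  · rintro ⟨hB1, hB2, hB3⟩
    refine ⟨hB2, fun G hBG hGΩ hGind => ?_⟩
    refine Set.Subset.antisymm (fun g hg => ?_) hBG
    by_contra hgB
    have hBsub : B ⊆ G \ {g} := fun x hx =>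
      ⟨hBG hx, fun h => hgB (h ▸ hx)⟩
    have : g ∈ pClosure S (G \ {g}) := by
      have h1 : g ∈ Ω := hGΩ hg
      rw [← hB3] at h1
      exact pClosure_mono S hBsub h1
    exact hGind g hg this
  · rintro ⟨hBind, hmax⟩
    refine ⟨hBΩ, hBind, ?_⟩
    refine Set.Subset.antisymm ?_ ?_
    · have h1 : pClosure S B ⊆ pClosure S Ω := pClosure_mono S hBΩ
      rwa [hΩcl] at h1
    · intro w hw
      by_contra hwcl
      have hind := part1 B hBfin hBind w hwcl
      have heq := hmax (insert w B) (Set.subset_insert w B)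
        (Set.insert_subset hw hBΩ) hind
      have : w ∈ B := heq ▸ Set.mem_insert w B
      exact hwcl (subset_pClosure S B this)
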